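/- Let k be a field of characteristic 2 and let G be a finite edge-weighted undirected graph (possibly with loops) with symmetric adjacency matrix A over k. Then det(A) equals the sum of the weights of the cycle covers of G that use only cycles of length at most 2 (loops and 2-cycles), where the weight of a 2-cycle through an edge of weight w is w², and the weight of a loop is its weight. -/

import Mathlib

/-- Over a field of characteristic 2, the determinant of a symmetric matrix
equals the sum of the weights of the cycle covers using only cycles of length
at most 2, i.e. the sum over involutive permutations `σ` of `∏ i, A i (σ i)`
(a fixed point contributes the loop weight `A i i` and a 2-cycle `{i,j}`
contributes `A i j * A j i = (A i j)^2`). -/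
theorem det_eq_sum_short_cycle_covers {k : Type*} [Field k] [CharP k 2] {n : ℕ}
    (A : Matrix (Fin n) (Fin n) k) (hA : A.IsSymm) :
    A.det = ∑ σ : Equiv.Perm (Fin n),
      if σ * σ = 1 then ∏ i, A i (σ i) else 0 := by
  haveI : CharP k 2 := inferInstance
  have hsym : ∀ i j, A i j = A j i := fun i j => (hA.apply i j).symm
  -- the weight of a permutation
  set f : Equiv.Perm (Fin n) → k := fun σ => ∏ i, A i (σ i) with hf
  -- weight is inversion-invariant
  have hinv : ∀ σ : Equiv.Perm (Fin n), f σ⁻¹ = f σ := by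
    intro σ
    have := Equiv.prod_comp σ (fun i => A i (σ⁻¹ i))
    simp only [Equiv.Perm.inv_def, Equiv.symm_apply_apply] at this
    calc f σ⁻¹ = ∏ i, A (σ i) i := this.symm
    _ = f σ := Finset.prod_congr rfl fun i _ => hsym _ _
  -- char 2: sign disappears
  have hdet : A.det = ∑ σ : Equiv.Perm (Fin n), f σ := by
    rw [Matrix.det_apply']
    refine Finset.sum_congr rfl fun σ _ => ?_
    have hsgn : ((Equiv.Perm.sign σ : ℤ) : k) = 1 := by
      rcases Int.units_eq_one_or (Equiv.Perm.sign σ) with h | h <;> rw [h] <;>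
        simp [CharTwo.neg_eq]
    rw [hsgn, one_mul]
    exact Finset.prod_congr rfl fun i _ => hsym _ _
  rw [hdet]
  -- now cancel non-involutions in pairs
  have hzero : ∑ σ : Equiv.Perm (Fin n), (if σ * σ = 1 then 0 else f σ) = 0 := by
    apply Finset.sum_involution (fun σ _ => σ⁻¹)
    · intro σ _
      by_cases h : σ * σ = 1
      · have h' : σ⁻¹ = σ := by
          rw [inv_eq_iff_mul_eq_one, h]
        simp [h, h']
      · have h' : ¬ σ⁻¹ * σ⁻¹ = 1 := by
          rw [← mul_inv_rev, inv_eq_one]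
          exact h
        simp only [if_neg h, if_neg h', hinv σ]
        exact CharTwo.add_self_eq_zero _
    · intro σ _ hne
      by_cases h : σ * σ = 1
      · simp [h] at hne
      · intro heq
        exact h (by nth_rewrite 2 [← heq]; simp)
    · intro σ _; exact inv_inv σ
    · intro σ _; exact Finset.mem_univ _
  have := congrArg (· + ∑ σ : Equiv.Perm (Fin n),
      (if σ * σ = 1 then ∏ i, A i (σ i) else 0)) hzero
  simp only [zero_add] at this
  rw [← this, ← Finset.sum_add_distrib]
  refine Finset.sum_congr rfl fun σ _ => ?_
  by_cases h : σ * σ = 1 <;> simp [h, f]
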